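/- Let P be the uniform distribution on [a,b] with a < b, and let β = {a}. For every n ∈ ℕ with n ≥ 1, the n-th conditional unconstrained quantization error for P with respect to β equals (b−a)²/(3(2n−1)²), and this infimum is attained by the set {a + 2(j−1)(b−a)/(2n−1) : 1 ≤ j ≤ n}. -/

import Mathlib

open MeasureTheory Set Filter

/-- The uniform distribution on `[a, b]`: normalized Lebesgue measure restricted to `[a, b]`. -/
noncomputable def uniformOn (a b : ℝ) : Measure ℝ :=
  (ENNReal.ofReal (b - a))⁻¹ • volume.restrict (Set.Icc a b)

/-- The distortion error of a set `s` of points for the measure `P`. -/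
noncomputable def distortion (P : Measure ℝ) (s : Set ℝ) : ℝ :=
  ∫ x, sInf ((fun a => (x - a) ^ 2) '' s) ∂P

/-- The `n`-th conditional (unconstrained) quantization error for `P` with respect to
the conditional set `β`. -/
noncomputable def condQuantError (P : Measure ℝ) (β : Set ℝ) (n : ℕ) : ℝ :=
  sInf { v : ℝ | ∃ α : Set ℝ, α.Finite ∧ α.ncard ≤ n - β.ncard ∧ v = distortion P (α ∪ β) }


lemma core (A B p q : ℝ) (hA : 0 < A) (hB : 0 < B) (hp : 0 ≤ p) (hq : 0 ≤ q) :
    (p+q)^3/(A+B)^2 ≤ p^3/A^2 + q^3/B^2 := by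
  rw [div_add_div _ _ (by positivity) (by positivity), div_le_div_iff₀ (by positivity) (by positivity)]
  nlinarith [sq_nonneg (p*B - q*A), mul_pos hA hB, sq_nonneg (p*B + q*A),
    mul_nonneg (mul_nonneg (sq_nonneg (p*B - q*A)) hp) hB.le,
    mul_nonneg (mul_nonneg (sq_nonneg (p*B - q*A)) hq) hA.le,
    mul_nonneg (mul_nonneg (sq_nonneg (p*B - q*A)) hp) hA.le,
    mul_nonneg (mul_nonneg (sq_nonneg (p*B - q*A)) hq) hB.le]

noncomputable def g (F : Finset ℝ) (hF : F.Nonempty) (x : ℝ) : ℝ :=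
  F.inf' hF (fun t => (x - t)^2)

lemma g_cont (F : Finset ℝ) (hF : F.Nonempty) : Continuous (g F hF) :=
  Continuous.finset_inf'_apply hF (fun i _ => by fun_prop)

lemma g_eq_sInf (F : Finset ℝ) (hF : F.Nonempty) (x : ℝ) :
    sInf ((fun t => (x - t)^2) '' (F : Set ℝ)) = g F hF x := by
  rw [g, Finset.inf'_eq_csInf_image]

lemma g_nonneg (F : Finset ℝ) (hF : F.Nonempty) (x : ℝ) : 0 ≤ g F hF x := by
  exact Finset.le_inf' hF _ (fun t ht => by positivity)

lemma single_int (t u v : ℝ) :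
    ∫ x in u..v, (x - t)^2 = ((v-t)^3 - (u-t)^3)/3 := by
  have := intervalIntegral.integral_comp_sub_right (a := u) (b := v) (fun x => x^2) t
  rw [this, integral_pow]
  norm_num

lemma g_union_left (F1 F2 : Finset ℝ) (h1 : F1.Nonempty) (h2 : F2.Nonempty)
    (hle : F1.max' h1 ≤ F2.min' h2) (x : ℝ)
    (hx : x ≤ (F1.max' h1 + F2.min' h2)/2) :
    g (F1 ∪ F2) (h1.mono Finset.subset_union_left) x = g F1 h1 x := by
  classical
  have h21 : g F1 h1 x ≤ g F2 h2 x := by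
    refine le_trans (Finset.inf'_le _ (F1.max'_mem h1)) (Finset.le_inf' h2 _ ?_)
    intro t ht
    have h1t : F2.min' h2 ≤ t := F2.min'_le t ht
    nlinarith [mul_nonneg (sub_nonneg.2 (le_trans hle h1t)) (by linarith : 0 ≤ F1.max' h1 + t - 2*x)]
  rw [g, Finset.inf'_union h1 h2]
  exact inf_eq_left.2 h21

lemma g_union_right (F1 F2 : Finset ℝ) (h1 : F1.Nonempty) (h2 : F2.Nonempty)
    (hle : F1.max' h1 ≤ F2.min' h2) (x : ℝ)
    (hx : (F1.max' h1 + F2.min' h2)/2 ≤ x) :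
    g (F1 ∪ F2) (h1.mono Finset.subset_union_left) x = g F2 h2 x := by
  classical
  have h21 : g F2 h2 x ≤ g F1 h1 x := by
    refine le_trans (Finset.inf'_le _ (F2.min'_mem h2)) (Finset.le_inf' h1 _ ?_)
    intro t ht
    have h1t : t ≤ F1.max' h1 := F1.le_max' t ht
    nlinarith [mul_nonneg (sub_nonneg.2 (le_trans h1t hle)) (by linarith : 0 ≤ 2*x - t - F2.min' h2)]
  rw [g, Finset.inf'_union h1 h2]
  exact inf_eq_right.2 h21

lemma split_integral (F1 F2 : Finset ℝ) (h1 : F1.Nonempty) (h2 : F2.Nonempty)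
    (hle : F1.max' h1 ≤ F2.min' h2) (u v : ℝ)
    (hu : u ≤ (F1.max' h1 + F2.min' h2)/2) (hv : (F1.max' h1 + F2.min' h2)/2 ≤ v) :
    ∫ x in u..v, g (F1 ∪ F2) (h1.mono Finset.subset_union_left) x
      = (∫ x in u..((F1.max' h1 + F2.min' h2)/2), g F1 h1 x)
        + ∫ x in ((F1.max' h1 + F2.min' h2)/2)..v, g F2 h2 x := by
  set m := (F1.max' h1 + F2.min' h2)/2 with hm
  rw [← intervalIntegral.integral_add_adjacent_intervals
      (a := u) (b := m) (c := v)
      ((g_cont _ _).intervalIntegrable _ _) ((g_cont _ _).intervalIntegrable _ _)]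
  congr 1
  · refine intervalIntegral.integral_congr (fun x hx => ?_)
    rw [Set.uIcc_of_le hu] at hx
    exact g_union_left F1 F2 h1 h2 hle x hx.2
  · refine intervalIntegral.integral_congr (fun x hx => ?_)
    rw [Set.uIcc_of_le hv] at hx
    exact g_union_right F1 F2 h1 h2 hle x hx.1

lemma g_eq_of_eq {F F' : Finset ℝ} (h : F = F') (hF : F.Nonempty) (hF' : F'.Nonempty) :
    g F hF = g F' hF' := by subst h; rfl

lemma single_lb_free (t u v : ℝ) (huv : u ≤ v) :
    (v - u)^3 / 12 ≤ ∫ x in u..v, (x - t)^2 := by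
  rw [single_int]
  nlinarith [mul_nonneg (sub_nonneg.2 huv) (sq_nonneg (u - t + (v-u)/2))]

lemma free_bound (k : ℕ) : ∀ F : Finset ℝ, ∀ hF : F.Nonempty, F.card = k → ∀ u v : ℝ, u ≤ v →
    (v - u)^3 / (12 * (k:ℝ)^2) ≤ ∫ x in u..v, g F hF x := by
  induction k using Nat.strong_induction_on with
  | _ k IH =>
  intro F hF hcard u v huv
  have hk1 : 1 ≤ k := hcard ▸ Finset.card_pos.2 hF
  rcases eq_or_lt_of_le hk1 with hk | hk2
  · -- k = 1
    obtain ⟨t, ht⟩ := Finset.card_eq_one.1 (hcard ▸ hk.symm)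
    subst ht
    have : ∀ x, g {t} (Finset.singleton_nonempty t) x = (x - t)^2 := fun x => by
      simp [g]
    rw [intervalIntegral.integral_congr (g := fun x => (x - t)^2) (fun x _ => this x), ← hk]
    simpa using single_lb_free t u v huv
  · -- k ≥ 2
    set M := F.max' hF with hM
    have hMF : M ∈ F := F.max'_mem hF
    set F' := F.erase M with hF'def
    have h' : F'.Nonempty := by
      rw [← Finset.card_pos, Finset.card_erase_of_mem hMF, hcard]
      omega
    have hcard' : F'.card = k - 1 := by rw [hF'def, Finset.card_erase_of_mem hMF, hcard]
    have hFU : F' ∪ {M} = F := by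
      rw [Finset.union_comm, ← Finset.insert_eq, Finset.insert_erase hMF]
    have hle : F'.max' h' ≤ ({M} : Finset ℝ).min' (Finset.singleton_nonempty M) := by
      simp only [Finset.min'_singleton]
      exact F.le_max' _ (Finset.mem_of_mem_erase (F'.max'_mem h'))
    set m := (F'.max' h' + ({M} : Finset ℝ).min' (Finset.singleton_nonempty M))/2 with hm
    have hgU := g_eq_of_eq hFU (h'.mono Finset.subset_union_left) hF
    have hkpos : (0:ℝ) < (k:ℝ) := by positivity
    have hk1pos : (0:ℝ) < (k:ℝ) - 1 := by
      have : (2:ℝ) ≤ (k:ℝ) := by exact_mod_cast hk2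
      linarith
    rcases le_or_gt m u with hmu | hum
    · -- g F = g {M} on [u,v]
      have : ∫ x in u..v, g F hF x
          = ∫ x in u..v, g {M} (Finset.singleton_nonempty M) x := by
        refine intervalIntegral.integral_congr (fun x hx => ?_)
        rw [Set.uIcc_of_le huv] at hx
        rw [← hgU]
        exact g_union_right F' {M} h' _ hle x (le_trans hmu hx.1)
      rw [this]
      refine le_trans ?_ (single_lb_free M u v huv)
      apply div_le_div_of_nonneg_left (pow_nonneg (sub_nonneg.2 huv) 3) (by norm_num)
      nlinarith
    rcases le_or_gt v m with hvm | hmv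
    · have : ∫ x in u..v, g F hF x = ∫ x in u..v, g F' h' x := by
        refine intervalIntegral.integral_congr (fun x hx => ?_)
        rw [Set.uIcc_of_le huv] at hx
        rw [← hgU]
        exact g_union_left F' {M} h' _ hle x (le_trans hx.2 hvm)
      rw [this]
      refine le_trans ?_ (IH (k-1) (by omega) F' h' hcard' u v huv)
      have hc : ((k-1:ℕ):ℝ) = (k:ℝ) - 1 := by push_cast [hk1]; ring
      rw [hc]
      apply div_le_div_of_nonneg_left (pow_nonneg (sub_nonneg.2 huv) 3) (by positivity)
      nlinarith
    · have hsplit := split_integral F' {M} h' (Finset.singleton_nonempty M) hle u v hum.le hmv.le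
      rw [← hgU, hsplit]
      have hL := IH (k-1) (by omega) F' h' hcard' u m hum.le
      have hR : (v - m)^3 / 12 ≤ ∫ x in m..v, g {M} (Finset.singleton_nonempty M) x := by
        refine le_trans (single_lb_free M m v hmv.le) (le_of_eq ?_)
        refine intervalIntegral.integral_congr (fun x _ => ?_)
        simp [g]
      have hc : ((k-1:ℕ):ℝ) = (k:ℝ) - 1 := by push_cast [hk1]; ring
      rw [hc] at hL
      have hcore := core (2*((k:ℝ)-1)) 2 (m-u) (v-m) (by linarith) (by norm_num)
        (by linarith) (by linarith)
      have : (v - u)^3 / (12 * (k:ℝ)^2)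
          ≤ (m-u)^3/(12*((k:ℝ)-1)^2) + (v-m)^3/12 := by
        have h1 : (m-u) + (v-m) = v - u := by ring
        rw [h1] at hcore
        have e1 : (2*((k:ℝ)-1)+2)^2 = 4 * (k:ℝ)^2 := by ring
        have e2 : (2*((k:ℝ)-1))^2 = 4*((k:ℝ)-1)^2 := by ring
        rw [e1, e2] at hcore
        have : (v-u)^3/(4*(k:ℝ)^2) ≤ (m-u)^3/(4*((k:ℝ)-1)^2) + (v-m)^3/(2:ℝ)^2 := hcore
        have e3 : (v-u)^3/(4*(k:ℝ)^2)/3 = (v-u)^3/(12*(k:ℝ)^2) := by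
          rw [div_div]; ring_nf
        have e4 : (m-u)^3/(4*((k:ℝ)-1)^2)/3 = (m-u)^3/(12*((k:ℝ)-1)^2) := by
          rw [div_div]; ring_nf
        linarith [this, e3, e4]
      linarith [this, hL, hR]

lemma single_lb_anchored (t u v : ℝ) (huv : u ≤ v) (htu : t ≤ u) :
    (v - u)^3 / 3 ≤ ∫ x in u..v, (x - t)^2 := by
  rw [single_int]
  nlinarith [mul_nonneg (mul_nonneg (sub_nonneg.2 huv) (sub_nonneg.2 htu))
    (by linarith : (0:ℝ) ≤ v - t)]

lemma anchored_bound (k : ℕ) : ∀ F : Finset ℝ, ∀ hF : F.Nonempty, F.card = k →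
    ∀ u v : ℝ, u ≤ v → (∃ t ∈ F, t ≤ u) →
    (v - u)^3 / (3 * (2*(k:ℝ) - 1)^2) ≤ ∫ x in u..v, g F hF x := by
  induction k using Nat.strong_induction_on with
  | _ k IH =>
  intro F hF hcard u v huv ⟨t0, ht0F, ht0u⟩
  have hk1 : 1 ≤ k := hcard ▸ Finset.card_pos.2 hF
  have hvu3 : (0:ℝ) ≤ (v-u)^3 := pow_nonneg (sub_nonneg.2 huv) 3
  rcases eq_or_lt_of_le hk1 with hk | hk2
  · obtain ⟨t, ht⟩ := Finset.card_eq_one.1 (hcard ▸ hk.symm)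
    subst ht
    have htt : t0 = t := Finset.mem_singleton.1 ht0F
    have : ∀ x, g {t} (Finset.singleton_nonempty t) x = (x - t)^2 := fun x => by simp [g]
    rw [intervalIntegral.integral_congr (g := fun x => (x - t)^2) (fun x _ => this x), ← hk]
    calc (v-u)^3/(3*(2*(1:ℕ)-1)^2) = (v-u)^3/3 := by norm_num
    _ ≤ _ := single_lb_anchored t u v huv (htt ▸ ht0u)
  · set M := F.max' hF with hM
    have hMF : M ∈ F := F.max'_mem hF
    have hkR : (2:ℝ) ≤ (k:ℝ) := by exact_mod_cast hk2
    have hden : (0:ℝ) < 2*(k:ℝ)-1 := by linarith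
    rcases le_or_gt M u with hMu | huM
    · -- all points ≤ u : g F x ≥ (x - M)^2 on [u,v]
      have hmono : ∫ x in u..v, (x - M)^2 ≤ ∫ x in u..v, g F hF x := by
        apply intervalIntegral.integral_mono_on huv
          ((by fun_prop : Continuous fun x => (x-M)^2).intervalIntegrable _ _)
          ((g_cont _ _).intervalIntegrable _ _)
        intro x hx
        refine Finset.le_inf' hF _ (fun t ht => ?_)
        have h1 : t ≤ M := F.le_max' t ht
        nlinarith [mul_nonneg (sub_nonneg.2 h1) (by linarith [hx.1] : (0:ℝ) ≤ x - t + (x - M))]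
      refine le_trans (le_trans ?_ (single_lb_anchored M u v huv hMu)) hmono
      apply div_le_div_of_nonneg_left hvu3 (by norm_num)
      nlinarith
    · -- M > u, so t0 ≠ M, t0 ∈ F'
      set F' := F.erase M with hF'def
      have ht0F' : t0 ∈ F' := Finset.mem_erase.2 ⟨by intro h; rw [h] at ht0u; linarith, ht0F⟩
      have h' : F'.Nonempty := ⟨t0, ht0F'⟩
      have hcard' : F'.card = k - 1 := by rw [hF'def, Finset.card_erase_of_mem hMF, hcard]
      have hFU : F' ∪ {M} = F := by
        rw [Finset.union_comm, ← Finset.insert_eq, Finset.insert_erase hMF]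
      have hle : F'.max' h' ≤ ({M} : Finset ℝ).min' (Finset.singleton_nonempty M) := by
        simp only [Finset.min'_singleton]
        exact F.le_max' _ (Finset.mem_of_mem_erase (F'.max'_mem h'))
      set m := (F'.max' h' + ({M} : Finset ℝ).min' (Finset.singleton_nonempty M))/2 with hm
      have hgU := g_eq_of_eq hFU (h'.mono Finset.subset_union_left) hF
      have hc : ((k-1:ℕ):ℝ) = (k:ℝ) - 1 := by push_cast [hk1]; ring
      have hden' : (0:ℝ) < 2*((k:ℝ)-1)-1 := by linarith
      rcases le_or_gt m u with hmu | hum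
      · have : ∫ x in u..v, g F hF x
            = ∫ x in u..v, g {M} (Finset.singleton_nonempty M) x := by
          refine intervalIntegral.integral_congr (fun x hx => ?_)
          rw [Set.uIcc_of_le huv] at hx
          rw [← hgU]
          exact g_union_right F' {M} h' _ hle x (le_trans hmu hx.1)
        rw [this]
        have h12 := free_bound 1 {M} (Finset.singleton_nonempty M) (by simp) u v huv
        refine le_trans ?_ (by simpa using h12)
        apply div_le_div_of_nonneg_left hvu3 (by norm_num)
        nlinarith
      rcases le_or_gt v m with hvm | hmv
      · have : ∫ x in u..v, g F hF x = ∫ x in u..v, g F' h' x := by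
          refine intervalIntegral.integral_congr (fun x hx => ?_)
          rw [Set.uIcc_of_le huv] at hx
          rw [← hgU]
          exact g_union_left F' {M} h' _ hle x (le_trans hx.2 hvm)
        rw [this]
        refine le_trans ?_ (IH (k-1) (by omega) F' h' hcard' u v huv ⟨t0, ht0F', ht0u⟩)
        rw [hc]
        apply div_le_div_of_nonneg_left hvu3 (by positivity)
        nlinarith
      · have hsplit := split_integral F' {M} h' (Finset.singleton_nonempty M) hle u v hum.le hmv.le
        rw [← hgU, hsplit]
        have hL := IH (k-1) (by omega) F' h' hcard' u m hum.le ⟨t0, ht0F', ht0u⟩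
        rw [hc] at hL
        have hR : (v - m)^3 / 12 ≤ ∫ x in m..v, g {M} (Finset.singleton_nonempty M) x := by
          refine le_trans (single_lb_free M m v hmv.le) (le_of_eq ?_)
          refine intervalIntegral.integral_congr (fun x _ => ?_)
          simp [g]
        have hcore := core (2*((k:ℝ)-1)-1) 2 (m-u) (v-m) (by linarith) (by norm_num)
          (by linarith) (by linarith)
        have h1 : (m-u) + (v-m) = v - u := by ring
        rw [h1] at hcore
        have e1 : (2*((k:ℝ)-1)-1+2) = 2*(k:ℝ)-1 := by ring
        rw [e1] at hcore
        -- hcore : (v-u)^3/(2k-1)^2 ≤ (m-u)^3/(2(k-1)-1)^2 + (v-m)^3/2^2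
        have e3 : (v-u)^3/((2*(k:ℝ)-1)^2)/3 = (v-u)^3/(3*(2*(k:ℝ)-1)^2) := by
          rw [div_div]; ring_nf
        have e4 : (m-u)^3/((2*((k:ℝ)-1)-1)^2)/3 = (m-u)^3/(3*(2*((k:ℝ)-1)-1)^2) := by
          rw [div_div]; ring_nf
        have e5 : (v-m)^3/(2:ℝ)^2 = (v-m)^3/4 := by norm_num
        rw [e5] at hcore
        linarith [hcore, e3, e4, hL, hR]

lemma exact_int (aa r : ℝ) (hr : 0 < r) (m : ℕ) (hm : 1 ≤ m)
    (hne : ((Finset.Icc 1 m).image (fun j : ℕ => aa + 2*((j:ℝ)-1)*r)).Nonempty) :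
    ∫ x in aa..(aa + (2*(m:ℝ)-1)*r),
      g ((Finset.Icc 1 m).image (fun j : ℕ => aa + 2*((j:ℝ)-1)*r)) hne x
    = (2*(m:ℝ)-1) * r^3 / 3 := by
  induction m, hm using Nat.le_induction with
  | base =>
    have h1 : (Finset.Icc 1 1).image (fun j : ℕ => aa + 2*((j:ℝ)-1)*r) = {aa} := by
      rw [Finset.Icc_self, Finset.image_singleton]
      norm_num
    rw [intervalIntegral.integral_congr
      (g := fun x => (x - aa)^2) (fun x _ => by rw [g_eq_of_eq h1 hne (Finset.singleton_nonempty aa)]; simp [g]),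
      single_int]
    norm_num
  | succ m hm IH =>
    set f := fun j : ℕ => aa + 2*((j:ℝ)-1)*r with hf
    set Fm := (Finset.Icc 1 m).image f with hFm
    have hFmne : Fm.Nonempty := Finset.Nonempty.image (Finset.nonempty_Icc.2 hm) _
    have hUnion : Fm ∪ {f (m+1)} = (Finset.Icc 1 (m+1)).image f := by
      rw [Finset.union_comm, ← Finset.insert_eq, ← Finset.image_insert]
      congr 1
      exact Finset.insert_Icc_right_eq_Icc_add_one (by omega)
    have hmax : Fm.max' hFmne = f m := by
      apply le_antisymm
      · apply Finset.max'_le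
        intro y hy
        obtain ⟨j, hj, rfl⟩ := Finset.mem_image.1 hy
        have hj' : (j:ℝ) ≤ (m:ℝ) := by exact_mod_cast (Finset.mem_Icc.1 hj).2
        simp only [hf]
        nlinarith
      · exact Finset.le_max' _ _ (Finset.mem_image.2 ⟨m, Finset.mem_Icc.2 ⟨hm, le_refl m⟩, rfl⟩)
    have hminS : ({f (m+1)} : Finset ℝ).min' (Finset.singleton_nonempty _) = f (m+1) :=
      Finset.min'_singleton _
    have hle : Fm.max' hFmne ≤ ({f (m+1)} : Finset ℝ).min' (Finset.singleton_nonempty _) := by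
      rw [hmax, hminS, hf]
      push_cast
      nlinarith
    have hmid : (Fm.max' hFmne + ({f (m+1)} : Finset ℝ).min' (Finset.singleton_nonempty _))/2
        = aa + (2*(m:ℝ)-1)*r := by
      rw [hmax, hminS, hf]
      push_cast
      ring
    have hmr : (1:ℝ) ≤ (m:ℝ) := by exact_mod_cast hm
    have hsplit := split_integral Fm {f (m+1)} hFmne (Finset.singleton_nonempty _) hle
      aa (aa + (2*((m:ℕ)+1:ℝ)-1)*r) (by rw [hmid]; push_cast; nlinarith) (by rw [hmid]; push_cast; nlinarith)
    rw [← g_eq_of_eq hUnion (hFmne.mono Finset.subset_union_left) hne]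
    push_cast at hsplit ⊢
    rw [hsplit, hmid]
    have hIH := IH hFmne
    rw [hIH]
    have hsing : ∫ x in (aa + (2*(m:ℝ)-1)*r)..(aa + (2*((m:ℝ)+1)-1)*r),
        g {f (m+1)} (Finset.singleton_nonempty _) x = 2*r^3/3 := by
      rw [intervalIntegral.integral_congr (g := fun x => (x - f (m+1))^2) (fun x _ => by simp [g]),
        single_int]
      simp only [hf]
      push_cast
      ring_nf
    rw [hsing]
    ring

lemma distortion_eq (a b : ℝ) (hab : a < b) (F : Finset ℝ) (hF : F.Nonempty) :
    distortion (uniformOn a b) (↑F) = (b-a)⁻¹ * ∫ x in a..b, g F hF x := by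
  rw [distortion, uniformOn, integral_smul_measure]
  simp only [g_eq_sInf F hF]
  rw [ENNReal.toReal_inv, ENNReal.toReal_ofReal (by linarith), smul_eq_mul]
  congr 1
  rw [intervalIntegral.integral_of_le hab.le, ← MeasureTheory.integral_Icc_eq_integral_Ioc]

lemma lower_bound_lem (a b : ℝ) (hab : a < b) (n : ℕ) (hn : 1 ≤ n)
    (α : Set ℝ) (hfin : α.Finite) (hcard : α.ncard ≤ n - 1) :
    (b - a) ^ 2 / (3 * (2 * (n : ℝ) - 1) ^ 2) ≤ distortion (uniformOn a b) (α ∪ {a}) := by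
  have hs : (α ∪ {a} : Set ℝ).Finite := hfin.union (Set.finite_singleton a)
  set F := hs.toFinset with hFdef
  have hcoe : (↑F : Set ℝ) = α ∪ {a} := Set.Finite.coe_toFinset hs
  have haF : a ∈ F := by rw [← Finset.mem_coe, hcoe]; exact Set.mem_union_right _ rfl
  have hF : F.Nonempty := ⟨a, haF⟩
  have hk : F.card = (α ∪ {a} : Set ℝ).ncard := (Set.ncard_eq_toFinset_card _ hs).symm
  have hkn : F.card ≤ n := by
    rw [hk]
    calc (α ∪ {a} : Set ℝ).ncard ≤ α.ncard + ({a} : Set ℝ).ncard := Set.ncard_union_le _ _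
    _ ≤ (n-1) + 1 := by rw [Set.ncard_singleton]; omega
    _ = n := by omega
  have hk1 : 1 ≤ F.card := Finset.card_pos.2 hF
  have hb := anchored_bound F.card F hF rfl a b hab.le ⟨a, haF, le_refl a⟩
  rw [← hcoe, distortion_eq a b hab F hF]
  have hkR : (1:ℝ) ≤ (F.card : ℝ) := by exact_mod_cast hk1
  have hnR : (F.card : ℝ) ≤ (n : ℝ) := by exact_mod_cast hkn
  have hd1 : (0:ℝ) < 2*(F.card:ℝ)-1 := by linarith
  have hd2 : (0:ℝ) < 2*(n:ℝ)-1 := by linarith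
  have hstep : (b - a) ^ 2 / (3 * (2 * (n : ℝ) - 1) ^ 2)
      ≤ (b-a)⁻¹ * ((b - a)^3 / (3 * (2*(F.card:ℝ) - 1)^2)) := by
    have hba : (0:ℝ) < b - a := by linarith
    have he : (b-a)⁻¹ * ((b - a)^3 / (3 * (2*(F.card:ℝ) - 1)^2))
        = (b-a)^2 / (3 * (2*(F.card:ℝ) - 1)^2) := by
      rw [← mul_div_assoc]
      congr 1
      field_simp
    rw [he]
    apply div_le_div_of_nonneg_left (by positivity) (by positivity)
    nlinarith
  refine le_trans hstep ?_
  exact mul_le_mul_of_nonneg_left hb (inv_nonneg.2 (by linarith))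

lemma attained (a b : ℝ) (hab : a < b) (n : ℕ) (hn : 1 ≤ n) :
    distortion (uniformOn a b)
        ((fun j : ℕ => a + 2 * ((j : ℝ) - 1) * (b - a) / (2 * (n : ℝ) - 1)) '' Set.Icc 1 n)
      = (b - a) ^ 2 / (3 * (2 * (n : ℝ) - 1) ^ 2) := by
  set r := (b - a) / (2 * (n : ℝ) - 1) with hr
  have hnR : (1:ℝ) ≤ (n:ℝ) := by exact_mod_cast hn
  have hden : (0:ℝ) < 2*(n:ℝ)-1 := by linarith
  have hrpos : 0 < r := div_pos (by linarith) hden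
  have hfun : (fun j : ℕ => a + 2 * ((j : ℝ) - 1) * (b - a) / (2 * (n : ℝ) - 1))
      = fun j : ℕ => a + 2*((j:ℝ)-1)*r := by
    funext j; rw [hr]; ring
  set Fn := (Finset.Icc 1 n).image (fun j : ℕ => a + 2*((j:ℝ)-1)*r) with hFn
  have hne : Fn.Nonempty := Finset.Nonempty.image (Finset.nonempty_Icc.2 hn) _
  have hset : ((fun j : ℕ => a + 2 * ((j : ℝ) - 1) * (b - a) / (2 * (n : ℝ) - 1)) '' Set.Icc 1 n)
      = ↑Fn := by
    rw [hfun, hFn, Finset.coe_image, Finset.coe_Icc]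
  rw [hset, distortion_eq a b hab Fn hne]
  have hbb : b = a + (2*(n:ℝ)-1)*r := by rw [hr]; field_simp; ring
  have hint := exact_int a r hrpos n hn hne
  rw [show b = a + (2*(n:ℝ)-1)*r from hbb, hint]
  have hrne : r ≠ 0 := ne_of_gt hrpos
  field_simp
  ring


/-- Conditional quantization for the uniform distribution on `[a,b]` with conditional set `{a}`:
the error is `(b-a)²/(3(2n-1)²)`, attained by `{a + 2(j-1)(b-a)/(2n-1) : 1 ≤ j ≤ n}`. -/
theorem stmt3 (a b : ℝ) (hab : a < b) (n : ℕ) (hn : 1 ≤ n) :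
    condQuantError (uniformOn a b) {a} n = (b - a) ^ 2 / (3 * (2 * (n : ℝ) - 1) ^ 2)
    ∧ distortion (uniformOn a b)
        ((fun j : ℕ => a + 2 * ((j : ℝ) - 1) * (b - a) / (2 * (n : ℝ) - 1)) '' Set.Icc 1 n)
      = (b - a) ^ 2 / (3 * (2 * (n : ℝ) - 1) ^ 2) := by
  refine ⟨?_, attained a b hab n hn⟩
  rw [condQuantError]
  set V := (b - a) ^ 2 / (3 * (2 * (n : ℝ) - 1) ^ 2) with hV
  set S := { v : ℝ | ∃ α : Set ℝ, α.Finite ∧ α.ncard ≤ n - ({a} : Set ℝ).ncard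
      ∧ v = distortion (uniformOn a b) (α ∪ {a}) } with hS
  set f := fun j : ℕ => a + 2 * ((j : ℝ) - 1) * (b - a) / (2 * (n : ℝ) - 1) with hf
  have hmem : V ∈ S := by
    refine ⟨f '' Set.Icc 2 n, (Set.finite_Icc _ _).image _, ?_, ?_⟩
    · refine le_trans (Set.ncard_image_le (Set.finite_Icc _ _)) ?_
      rw [← Finset.coe_Icc, Set.ncard_coe_finset, Nat.card_Icc, Set.ncard_singleton]
      omega
    · have hIcc : Set.Icc (1:ℕ) n = Set.Icc 2 n ∪ {1} := by
        ext j; simp only [Set.mem_Icc, Set.mem_union, Set.mem_singleton_iff]; omega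
      have hf1 : f 1 = a := by rw [hf]; norm_num
      have himg : f '' Set.Icc 1 n = (f '' Set.Icc 2 n) ∪ {a} := by
        rw [hIcc, Set.image_union, Set.image_singleton, hf1]
      rw [← himg, hV, hf]
      exact (attained a b hab n hn).symm
  have hlb : ∀ v ∈ S, V ≤ v := by
    rintro v ⟨α, hfin, hcard, rfl⟩
    rw [Set.ncard_singleton] at hcard
    exact lower_bound_lem a b hab n hn α hfin hcard
  exact le_antisymm (csInf_le ⟨V, hlb⟩ hmem) (le_csInf ⟨V, hmem⟩ hlb)
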